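/- For any n ≥ 1 and any τ_{i,0}, τ_{i,1} with 1 ≥ τ_{i,0} ≥ τ_{i,1} ≥ 0, the maximal n-local star score satisfies S*_{n-Star} = ∏_{i=1}^n (τ_{i,0}² + τ_{i,1}²)^{1/(2n)} ≤ √2, with equality iff τ_{i,0} = τ_{i,1} = 1 for all i. -/

import Mathlib

open Finset

theorem star_score_tsirelson_bound (n : ℕ) (hn : 0 < n)
    (τ : Fin n → Fin 2 → ℝ)
    (h1 : ∀ i, τ i 0 ≤ 1) (h2 : ∀ i, τ i 1 ≤ τ i 0) (h3 : ∀ i, 0 ≤ τ i 1) :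
    ∏ i, ((τ i 0) ^ 2 + (τ i 1) ^ 2) ^ ((1 : ℝ) / (2 * n)) ≤ Real.sqrt 2 ∧
      (∏ i, ((τ i 0) ^ 2 + (τ i 1) ^ 2) ^ ((1 : ℝ) / (2 * n)) = Real.sqrt 2 ↔
        ∀ i, τ i 0 = 1 ∧ τ i 1 = 1) := by
  have hnR : (0:ℝ) < n := by exact_mod_cast hn
  set c : ℝ := (1:ℝ)/(2*(n:ℝ)) with hc
  have hcpos : 0 < c := by positivity
  set f : Fin n → ℝ := fun i => (τ i 0)^2 + (τ i 1)^2 with hf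
  have hf0 : ∀ i, 0 ≤ f i := fun i => by positivity
  have hf2 : ∀ i, f i ≤ 2 := fun i => by
    simp only [hf]; nlinarith [h1 i, h2 i, h3 i]
  have hfeq : ∀ i, f i = 2 ↔ (τ i 0 = 1 ∧ τ i 1 = 1) := by
    intro i
    constructor
    · intro h
      simp only [hf] at h
      constructor <;> nlinarith [h1 i, h2 i, h3 i]
    · rintro ⟨e0, e1⟩; simp [hf, e0, e1]; norm_num
  have hP0 : 0 ≤ ∏ i, f i := Finset.prod_nonneg (fun i _ => hf0 i)
  have hPle : ∏ i, f i ≤ 2 ^ n := by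
    calc ∏ i, f i ≤ ∏ _i : Fin n, (2:ℝ) :=
          Finset.prod_le_prod (fun i _ => hf0 i) (fun i _ => hf2 i)
      _ = 2 ^ n := by simp
  have hprod : ∏ i, (f i) ^ c = (∏ i, f i) ^ c :=
    Real.finset_prod_rpow _ _ (fun i _ => hf0 i) _
  have h2n : ((2:ℝ)^n) ^ c = Real.sqrt 2 := by
    rw [← Real.rpow_natCast 2 n, ← Real.rpow_mul (by norm_num)]
    rw [Real.sqrt_eq_rpow]
    congr 1
    rw [hc]
    field_simp
  have hle : ∏ i, (f i) ^ c ≤ Real.sqrt 2 := by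
    rw [hprod, ← h2n]
    exact Real.rpow_le_rpow hP0 hPle hcpos.le
  refine ⟨hle, ?_, ?_⟩
  · intro heq
    have hPeq : ∏ i, f i = 2 ^ n := by
      by_contra hne
      have hlt : ∏ i, f i < 2 ^ n := lt_of_le_of_ne hPle hne
      have := Real.rpow_lt_rpow hP0 hlt hcpos
      rw [h2n, ← hprod, heq] at this
      exact lt_irrefl _ this
    intro i
    rw [← hfeq i]
    by_contra hne
    have hfi : f i < 2 := lt_of_le_of_ne (hf2 i) hne
    have hsplit : ∏ j, f j = f i * ∏ j ∈ univ.erase i, f j :=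
      (Finset.mul_prod_erase univ f (mem_univ i)).symm
    have hcard : (univ.erase i).card = n - 1 := by
      rw [Finset.card_erase_of_mem (mem_univ i)]; simp
    have herase : ∏ j ∈ univ.erase i, f j ≤ 2 ^ (n-1) := by
      calc ∏ j ∈ univ.erase i, f j ≤ ∏ _j ∈ univ.erase i, (2:ℝ) :=
            Finset.prod_le_prod (fun j _ => hf0 j) (fun j _ => hf2 j)
        _ = 2 ^ (n-1) := by rw [Finset.prod_const, hcard]
    have hpow : (0:ℝ) < 2 ^ (n-1) := by positivity
    have : ∏ j, f j < 2 ^ n := by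
      calc ∏ j, f j = f i * ∏ j ∈ univ.erase i, f j := hsplit
        _ ≤ f i * 2 ^ (n-1) := mul_le_mul_of_nonneg_left herase (hf0 i)
        _ < 2 * 2 ^ (n-1) := by exact mul_lt_mul_of_pos_right hfi hpow
        _ = 2 ^ n := by
            rw [← pow_succ']
            congr 1
            omega
    rw [hPeq] at this
    exact lt_irrefl _ this
  · intro h
    have : ∀ i, f i = 2 := fun i => (hfeq i).mpr (h i)
    have hPeq : ∏ i, f i = 2 ^ n := by
      rw [Finset.prod_congr rfl (fun i _ => this i)]; simp
    rw [hprod, hPeq, h2n]
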